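/- Let q ≥ 1, s ≥ 1 and m ≥ 1 be integers. Let M be a 0,1-matrix whose rows are partitioned into consecutive intervals R_1, …, R_m (in row order) and whose columns are partitioned into consecutive intervals C_1, …, C_m (in column order), and suppose that the zone R_a ∩ C_b contains only 0 entries whenever |a − b| ∉ {0, 1, s}. If M admits a rank-(11(q+1)) division, then some zone R_a ∩ C_b admits a rank-q division. -/

import Mathlib

/-- A `k`-division of a matrix whose rows are indexed by the linearly ordered type `I`
and whose columns are indexed by the linearly ordered type `J`: a partition of the rows
(resp. columns) into `k` consecutive intervals, encoded by a monotone surjection onto `Fin k`. -/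
structure Division (I J : Type*) [LinearOrder I] [LinearOrder J] (k : ℕ) where
  rowPart : I → Fin k
  colPart : J → Fin k
  rowMono : Monotone rowPart
  colMono : Monotone colPart
  rowSurj : Function.Surjective rowPart
  colSurj : Function.Surjective colPart

/-- The cell `(a, b)` of the division contains at least `q` pairwise distinct rows. -/
def Division.CellHasDistinctRows {I J : Type*} [LinearOrder I] [LinearOrder J] {k : ℕ}
    {α : Type*} (D : Division I J k) (M : I → J → α) (a b : Fin k) (q : ℕ) : Prop :=
  ∃ S : Finset I, q ≤ S.card ∧ (∀ i ∈ S, D.rowPart i = a) ∧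
    ∀ i ∈ S, ∀ i' ∈ S, i ≠ i' → ∃ j : J, D.colPart j = b ∧ M i j ≠ M i' j

/-- The cell `(a, b)` of the division contains at least `q` pairwise distinct columns. -/
def Division.CellHasDistinctCols {I J : Type*} [LinearOrder I] [LinearOrder J] {k : ℕ}
    {α : Type*} (D : Division I J k) (M : I → J → α) (a b : Fin k) (q : ℕ) : Prop :=
  ∃ S : Finset J, q ≤ S.card ∧ (∀ j ∈ S, D.colPart j = b) ∧
    ∀ j ∈ S, ∀ j' ∈ S, j ≠ j' → ∃ i : I, D.rowPart i = a ∧ M i j ≠ M i j'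

/-- The matrix `M` admits a rank-`k` division: a `k`-division each of whose cells has at
least `k` pairwise distinct rows or at least `k` pairwise distinct columns. -/
def HasRankDivision {I J : Type*} [LinearOrder I] [LinearOrder J] {α : Type*}
    (M : I → J → α) (k : ℕ) : Prop :=
  ∃ D : Division I J k, ∀ a b : Fin k,
    D.CellHasDistinctRows M a b k ∨ D.CellHasDistinctCols M a b k

/-- The grid rank of a matrix: the largest `k` such that `M` admits a rank-`k` division. -/
noncomputable def gridRank {I J : Type*} [LinearOrder I] [LinearOrder J] {α : Type*}
    (M : I → J → α) : ℕ :=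
  sSup {k : ℕ | HasRankDivision M k}

private def NatDist (s x y : ℕ) : Prop :=
  max x y - min x y = 0 ∨ max x y - min x y = 1 ∨ max x y - min x y = s

private lemma natDist_comm {s x y : ℕ} (h : NatDist s x y) : NatDist s y x := by
  unfold NatDist at *
  rw [max_comm, min_comm]
  exact h

private lemma hi_mono_aux (K : ℕ) (lo hi : ℕ → ℕ)
    (h1 : ∀ t, t < K → lo t ≤ hi t) (h2 : ∀ t, t + 1 < K → hi t ≤ lo (t + 1)) :
    ∀ t d, t + d < K → hi t ≤ hi (t + d) := by
  intro t d
  induction d with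
  | zero => intro _; exact le_rfl
  | succ d ih =>
    intro h
    have h' : t + d + 1 < K := by omega
    calc hi t ≤ hi (t + d) := ih (by omega)
      _ ≤ lo (t + d + 1) := h2 _ h'
      _ ≤ hi (t + d + 1) := h1 _ h'

private lemma lo_mono_aux (K : ℕ) (lo hi : ℕ → ℕ)
    (h1 : ∀ t, t < K → lo t ≤ hi t) (h2 : ∀ t, t + 1 < K → hi t ≤ lo (t + 1)) :
    ∀ t d, t + d < K → lo t ≤ lo (t + d) := by
  intro t d
  induction d with
  | zero => intro _; exact le_rfl
  | succ d ih =>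
    intro h
    have h' : t + d + 1 < K := by omega
    calc lo t ≤ lo (t + d) := ih (by omega)
      _ ≤ hi (t + d) := h1 _ (by omega)
      _ ≤ lo (t + d + 1) := h2 _ h'

private lemma class_bound (K step inc : ℕ) (hinc : 1 ≤ inc)
    (lo hi : ℕ → ℕ)
    (h1 : ∀ t, t < K → lo t ≤ hi t) (h2 : ∀ t, t + 1 < K → hi t ≤ lo (t + 1))
    (Hgrow : ∀ t j, t + step * j < K → hi t + inc * j ≤ hi (t + step * j))
    (L c ℓ : ℕ) (T : Finset ℕ)
    (hT : ∀ t ∈ T, t < K ∧ ∃ x, lo t ≤ x ∧ x ≤ hi t ∧ L ≤ x + c ∧ x + c ≤ L + ℓ) :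
    T.card ≤ step * (ℓ / inc + 1) + 1 := by
  rcases T.eq_empty_or_nonempty with rfl | hne
  · simp
  set t₁ := T.min' hne with ht1
  set t₂ := T.max' hne with ht2
  have ht1m : t₁ ∈ T := T.min'_mem hne
  have ht2m : t₂ ∈ T := T.max'_mem hne
  have hsub : T ⊆ Finset.Icc t₁ t₂ := by
    intro x hx
    simp only [Finset.mem_Icc]
    exact ⟨T.min'_le x hx, T.le_max' x hx⟩
  have hcard : T.card ≤ t₂ + 1 - t₁ := by
    have := Finset.card_le_card hsub
    rwa [Nat.card_Icc] at this
  set j₀ := ℓ / inc + 1 with hj0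
  by_contra hcon
  push_neg at hcon
  have hgap : t₁ + step * j₀ + 1 ≤ t₂ := by omega
  obtain ⟨hK1, x₁, hx1l, hx1h, hx1L, hx1U⟩ := hT t₁ ht1m
  obtain ⟨hK2, x₂, hx2l, hx2h, hx2L, hx2U⟩ := hT t₂ ht2m
  have hg := Hgrow t₁ j₀ (by omega)
  have hmid : hi (t₁ + step * j₀) ≤ lo t₂ := by
    have he : t₁ + step * j₀ + (t₂ - 1 - (t₁ + step * j₀)) = t₂ - 1 := by omega
    have hm := hi_mono_aux K lo hi h1 h2 (t₁ + step * j₀) (t₂ - 1 - (t₁ + step * j₀)) (by omega)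
    rw [he] at hm
    have := h2 (t₂ - 1) (by omega)
    have he2 : t₂ - 1 + 1 = t₂ := by omega
    rw [he2] at this
    exact le_trans hm this
  have hchain : x₁ + inc * j₀ ≤ x₂ := by
    have := le_trans hg (le_trans hmid hx2l)
    omega
  have hdm := Nat.div_add_mod ℓ inc
  have hmlt : ℓ % inc < inc := Nat.mod_lt _ (by omega)
  have hmul : inc * j₀ = inc * (ℓ / inc) + inc := by rw [hj0, Nat.mul_succ]
  omega

private lemma phase (K s step inc : ℕ) (hinc : 1 ≤ inc)
    (lo hi : ℕ → ℕ)
    (h1 : ∀ t, t < K → lo t ≤ hi t) (h2 : ∀ t, t + 1 < K → hi t ≤ lo (t + 1))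
    (Hgrow : ∀ t j, t + step * j < K → hi t + inc * j ≤ hi (t + step * j))
    (Lo Hi : ℕ) (hLH : Lo ≤ Hi)
    (HCfix : ∀ t, t < K → ∃ x y, lo t ≤ x ∧ x ≤ hi t ∧ Lo ≤ y ∧ y ≤ Hi ∧ NatDist s x y) :
    K ≤ 3 * (step * ((Hi - Lo + 2) / inc + 1) + 1) := by
  classical
  set ℓ := Hi - Lo + 2 with hl
  set B := step * (ℓ / inc + 1) + 1 with hB
  set P1 : ℕ → Prop := fun t => ∃ x, lo t ≤ x ∧ x ≤ hi t ∧ Lo ≤ x + 1 ∧ x + 1 ≤ Lo + ℓ with hP1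
  set P2 : ℕ → Prop := fun t => ∃ x, lo t ≤ x ∧ x ≤ hi t ∧ Lo + s ≤ x ∧ x ≤ Lo + s + ℓ with hP2
  set P3 : ℕ → Prop := fun t => ∃ x, lo t ≤ x ∧ x ≤ hi t ∧ Lo ≤ x + s ∧ x + s ≤ Lo + ℓ with hP3
  have cover : ∀ t ∈ Finset.range K, P1 t ∨ P2 t ∨ P3 t := by
    intro t ht
    rw [Finset.mem_range] at ht
    obtain ⟨x, y, hxl, hxh, hyl, hyh, hd⟩ := HCfix t ht
    unfold NatDist at hd
    rcases le_total x y with hxy | hxy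
    · rw [max_eq_right hxy, min_eq_left hxy] at hd
      rcases hd with hd | hd | hd
      · exact Or.inl ⟨x, hxl, hxh, by omega, by omega⟩
      · exact Or.inl ⟨x, hxl, hxh, by omega, by omega⟩
      · exact Or.inr (Or.inr ⟨x, hxl, hxh, by omega, by omega⟩)
    · rw [max_eq_left hxy, min_eq_right hxy] at hd
      rcases hd with hd | hd | hd
      · exact Or.inl ⟨x, hxl, hxh, by omega, by omega⟩
      · exact Or.inl ⟨x, hxl, hxh, by omega, by omega⟩
      · exact Or.inr (Or.inl ⟨x, hxl, hxh, by omega, by omega⟩)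
  have hsub : Finset.range K ⊆
      ((Finset.range K).filter P1 ∪ (Finset.range K).filter P2 ∪ (Finset.range K).filter P3) := by
    intro t ht
    rcases cover t ht with h | h | h <;>
      simp [Finset.mem_union, Finset.mem_filter, ht, h]
  have hc1 : ((Finset.range K).filter P1).card ≤ B := by
    apply class_bound K step inc hinc lo hi h1 h2 Hgrow Lo 1 ℓ
    intro t ht
    rw [Finset.mem_filter, Finset.mem_range] at ht
    obtain ⟨htK, x, ha, hb, hc, hd⟩ := ht
    exact ⟨htK, x, ha, hb, hc, hd⟩
  have hc2 : ((Finset.range K).filter P2).card ≤ B := by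
    apply class_bound K step inc hinc lo hi h1 h2 Hgrow (Lo + s) 0 ℓ
    intro t ht
    rw [Finset.mem_filter, Finset.mem_range] at ht
    obtain ⟨htK, x, ha, hb, hc, hd⟩ := ht
    exact ⟨htK, x, ha, hb, by omega, by omega⟩
  have hc3 : ((Finset.range K).filter P3).card ≤ B := by
    apply class_bound K step inc hinc lo hi h1 h2 Hgrow Lo s ℓ
    intro t ht
    rw [Finset.mem_filter, Finset.mem_range] at ht
    obtain ⟨htK, x, ha, hb, hc, hd⟩ := ht
    exact ⟨htK, x, ha, hb, hc, hd⟩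
  have hcard := Finset.card_le_card hsub
  rw [Finset.card_range] at hcard
  have hu1 := Finset.card_union_le
    ((Finset.range K).filter P1 ∪ (Finset.range K).filter P2) ((Finset.range K).filter P3)
  have hu2 := Finset.card_union_le ((Finset.range K).filter P1) ((Finset.range K).filter P2)
  omega

private lemma pingpong (q s K W : ℕ) (hq : 1 ≤ q) (hK : K = 11 * (q + 1)) (hW : 1 ≤ W)
    (lo1 hi1 lo2 hi2 : ℕ → ℕ)
    (h11 : ∀ t, t < K → lo1 t ≤ hi1 t)
    (h21 : ∀ t, t < K → lo2 t ≤ hi2 t) (h22 : ∀ t, t + 1 < K → hi2 t ≤ lo2 (t + 1))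
    (hW2 : ∀ u, u < K → lo2 u + W ≤ hi2 u)
    (HC : ∀ t, t < K → ∀ u, u < K → ∃ x y, lo1 t ≤ x ∧ x ≤ hi1 t ∧ lo2 u ≤ y ∧ y ≤ hi2 u ∧
      NatDist s x y) :
    ∀ t, t < K → lo1 t + 2 * W ≤ hi1 t := by
  intro t ht
  have grow2 : ∀ u j, u + 1 * j < K → hi2 u + W * j ≤ hi2 (u + 1 * j) := by
    intro u j
    rw [one_mul]
    induction j with
    | zero => intro _; simp
    | succ j ih =>
      intro h
      have h' : u + j + 1 < K := by omega
      have hstep : hi2 (u + j) + W ≤ hi2 (u + j + 1) :=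
        le_trans (by have := h22 (u + j) h'; omega) (hW2 (u + j + 1) h')
      have := ih (by omega)
      have hmulW : W * (j + 1) = W * j + W := by ring
      show hi2 u + W * (j + 1) ≤ hi2 (u + j + 1)
      omega
  have hph := phase K s 1 W hW lo2 hi2 h21 h22 grow2 (lo1 t) (hi1 t) (h11 t ht)
    (fun u hu => by
      obtain ⟨x, y, ha, hb, hc, hd, he⟩ := HC t ht u hu
      exact ⟨y, x, hc, hd, ha, hb, natDist_comm he⟩)
  obtain ⟨d, hd⟩ : ∃ d, (hi1 t - lo1 t + 2) / W = d := ⟨_, rfl⟩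
  rw [hd] at hph
  have h6 : 6 ≤ d := by omega
  have h6' : 6 * W ≤ hi1 t - lo1 t + 2 := by
    rw [← hd] at h6
    exact (Nat.le_div_iff_mul_le (by omega)).mp h6
  have := h11 t ht
  omega

private lemma comb_false (q s K N : ℕ) (hq : 1 ≤ q) (hK : K = 11 * (q + 1))
    (alo ahi blo bhi : ℕ → ℕ)
    (ha1 : ∀ t, t < K → alo t ≤ ahi t) (ha2 : ∀ t, t + 1 < K → ahi t ≤ alo (t + 1))
    (hb1 : ∀ t, t < K → blo t ≤ bhi t) (hb2 : ∀ t, t + 1 < K → bhi t ≤ blo (t + 1))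
    (hbN : ∀ u, u < K → bhi u ≤ N)
    (HC : ∀ t, t < K → ∀ u, u < K → ∃ x y, alo t ≤ x ∧ x ≤ ahi t ∧ blo u ≤ y ∧ y ≤ bhi u ∧
      NatDist s x y)
    (hnorun : ∀ t₀, t₀ + q ≤ K → alo t₀ < ahi (t₀ + q - 1)) : False := by
  have grow_a : ∀ t j, t + q * j < K → ahi t + 1 * j ≤ ahi (t + q * j) := by
    intro t j
    induction j with
    | zero => intro _; simp
    | succ j ih =>
      intro h
      have hmul : q * (j + 1) = q * j + q := by ring
      have hqj : t + q * j + 1 + q ≤ K := by omega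
      have hnr := hnorun (t + q * j + 1) hqj
      have he : t + q * j + 1 + q - 1 = t + q * (j + 1) := by omega
      rw [he] at hnr
      have h2' := ha2 (t + q * j) (by omega)
      have := ih (by omega)
      omega
  -- Phase 1 : every b-width is at least 1
  have hW0 : ∀ u, u < K → blo u + 1 ≤ bhi u := by
    intro u hu
    by_contra hcon
    have hw : bhi u - blo u = 0 := by have := hb1 u hu; omega
    have hph := phase K s q 1 (le_refl 1) alo ahi ha1 ha2 grow_a (blo u) (bhi u) (hb1 u hu)
      (fun t ht => HC t ht u hu)
    rw [hw] at hph
    norm_num at hph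
    omega
  -- induction : b-widths at least 4^n
  have main : ∀ n, ∀ u, u < K → blo u + 4 ^ n ≤ bhi u := by
    intro n
    induction n with
    | zero => simpa using hW0
    | succ n ih =>
      have hWpos : 1 ≤ 4 ^ n := Nat.one_le_pow _ _ (by norm_num)
      have hWa : ∀ t, t < K → alo t + 2 * 4 ^ n ≤ ahi t :=
        pingpong q s K (4 ^ n) hq hK hWpos alo ahi blo bhi ha1 hb1 hb2 ih HC
      have hWb : ∀ u, u < K → blo u + 2 * (2 * 4 ^ n) ≤ bhi u :=
        pingpong q s K (2 * 4 ^ n) hq hK (by omega) blo bhi alo ahi hb1 ha1 ha2 hWa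
          (fun u hu t ht => by
            obtain ⟨x, y, h1, h2, h3, h4, h5⟩ := HC t ht u hu
            exact ⟨y, x, h3, h4, h1, h2, natDist_comm h5⟩)
      intro u hu
      have := hWb u hu
      have hpow : (4 : ℕ) ^ (n + 1) = 4 ^ n * 4 := pow_succ 4 n
      omega
  have hK0 : 0 < K := by omega
  have h1 := main (N + 1) 0 hK0
  have h2 := hbN 0 hK0
  have h3 : N < 2 ^ N := Nat.lt_two_pow_self (n := N)
  have h4 : (2 : ℕ) ^ N ≤ 4 ^ N := Nat.pow_le_pow_left (by norm_num) N
  have h5 : (4 : ℕ) ^ N ≤ 4 ^ (N + 1) := Nat.pow_le_pow_right (by norm_num) (by omega)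
  omega

private lemma comb_run (q s K N : ℕ) (hq : 1 ≤ q) (hK : K = 11 * (q + 1))
    (alo ahi blo bhi : ℕ → ℕ)
    (ha1 : ∀ t, t < K → alo t ≤ ahi t) (ha2 : ∀ t, t + 1 < K → ahi t ≤ alo (t + 1))
    (hb1 : ∀ t, t < K → blo t ≤ bhi t) (hb2 : ∀ t, t + 1 < K → bhi t ≤ blo (t + 1))
    (hbN : ∀ u, u < K → bhi u ≤ N)
    (HC : ∀ t, t < K → ∀ u, u < K → ∃ x y, alo t ≤ x ∧ x ≤ ahi t ∧ blo u ≤ y ∧ y ≤ bhi u ∧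
      NatDist s x y) :
    ∃ c t₀, t₀ + q ≤ K ∧ ∀ k, k < q → alo (t₀ + k) = c ∧ ahi (t₀ + k) = c := by
  by_contra h
  push_neg at h
  refine comb_false q s K N hq hK alo ahi blo bhi ha1 ha2 hb1 hb2 hbN HC ?_
  intro t₀ ht₀
  by_contra hlt
  push_neg at hlt
  obtain ⟨k, hk, hne⟩ := h (alo t₀) t₀ ht₀
  have hlo := lo_mono_aux K alo ahi ha1 ha2 t₀ k (by omega)
  have hhi := hi_mono_aux K alo ahi ha1 ha2 (t₀ + k) (q - 1 - k) (by omega)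
  have he : t₀ + k + (q - 1 - k) = t₀ + q - 1 := by omega
  rw [he] at hhi
  have h1 := ha1 (t₀ + k) (by omega)
  exact hne (by omega) (by omega)

private noncomputable def pLo {I : Type} (pt : I → ℕ) (z : I → ℕ) (t : ℕ) : ℕ :=
  sInf {n | ∃ i, pt i = t ∧ z i = n}

private def pHi {I : Type} [Fintype I] (pt : I → ℕ) (z : I → ℕ) (t : ℕ) : ℕ :=
  (Finset.univ.filter fun i => pt i = t).sup z

private lemma pLo_le {I : Type} (pt : I → ℕ) (z : I → ℕ) {t : ℕ}
    (i : I) (h : pt i = t) : pLo pt z t ≤ z i :=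
  Nat.sInf_le ⟨i, h, rfl⟩

private lemma le_pHi {I : Type} [Fintype I] (pt : I → ℕ) (z : I → ℕ) {t : ℕ}
    (i : I) (h : pt i = t) : z i ≤ pHi pt z t :=
  Finset.le_sup (by simp [h])

private lemma pHi_le {I : Type} [Fintype I] (pt : I → ℕ) (z : I → ℕ) {t n : ℕ}
    (h : ∀ i, pt i = t → z i ≤ n) : pHi pt z t ≤ n := by
  apply Finset.sup_le
  intro i hi
  simp only [Finset.mem_filter, Finset.mem_univ, true_and] at hi
  exact h i hi

private lemma le_pLo {I : Type} (pt : I → ℕ) (z : I → ℕ) {t n : ℕ}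
    (hne : ∃ i, pt i = t) (h : ∀ i, pt i = t → n ≤ z i) : n ≤ pLo pt z t := by
  obtain ⟨i0, hi0⟩ := hne
  have hmem := Nat.sInf_mem (⟨z i0, i0, hi0, rfl⟩ : {n | ∃ i, pt i = t ∧ z i = n}.Nonempty)
  obtain ⟨i1, hi1, hz1⟩ := hmem
  rw [pLo, ← hz1]
  exact h i1 hi1

/-- Structural facts about the interval of zone indices spanned by each part. -/
private lemma side_facts {I : Type} [Fintype I] [LinearOrder I] {K m : ℕ} (hm : 1 ≤ m)
    (p : I → Fin K) (z : I → Fin m) (hp : Monotone p) (hz : Monotone z)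
    (hs : Function.Surjective p) :
    (∀ t, t < K → pLo (fun i => (p i).val) (fun i => (z i).val) t ≤
        pHi (fun i => (p i).val) (fun i => (z i).val) t) ∧
    (∀ t, t + 1 < K → pHi (fun i => (p i).val) (fun i => (z i).val) t ≤
        pLo (fun i => (p i).val) (fun i => (z i).val) (t + 1)) ∧
    (∀ t, t < K → pHi (fun i => (p i).val) (fun i => (z i).val) t ≤ m - 1) := by
  refine ⟨?_, ?_, ?_⟩
  · intro t ht
    obtain ⟨i, hi⟩ := hs ⟨t, ht⟩
    have hit : (p i).val = t := by rw [hi]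
    exact le_trans (pLo_le (fun i => (p i).val) (fun i => (z i).val) i hit)
      (le_pHi (fun i => (p i).val) (fun i => (z i).val) i hit)
  · intro t ht
    apply pHi_le
    intro i hi
    obtain ⟨i'', hi''⟩ := hs ⟨t + 1, ht⟩
    apply le_pLo _ _ ⟨i'', by rw [hi'']⟩
    intro i' hi'
    have hle : i ≤ i' := by
      by_contra hcon
      push_neg at hcon
      have := hp hcon.le
      rw [Fin.le_def, hi, hi'] at this
      omega
    exact Fin.le_def.mp (hz hle)
  · intro t ht
    apply pHi_le
    intro i _
    have := (z i).isLt
    omega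


attribute [irreducible] pLo pHi

/-- Let `q, s, m ≥ 1`. Let `M` be a 0,1-matrix whose rows and columns are each
partitioned into `m` consecutive intervals (a `Division`), such that the zone `R_a ∩ C_b`
contains only `0` entries whenever `|a - b| ∉ {0, 1, s}`. If `M` admits a
rank-`11(q+1)` division, then some zone `R_a ∩ C_b` admits a rank-`q` division. -/
theorem stmt2 (q s m : ℕ) (hq : 1 ≤ q) (hs : 1 ≤ s) (hm : 1 ≤ m)
    (I J : Type) [Fintype I] [LinearOrder I] [Fintype J] [LinearOrder J]
    (M : I → J → Bool) (D : Division I J m)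
    (hzero : ∀ (i : I) (j : J),
      (max (D.rowPart i).val (D.colPart j).val - min (D.rowPart i).val (D.colPart j).val)
        ∉ ({0, 1, s} : Set ℕ) → M i j = false)
    (hrank : HasRankDivision M (11 * (q + 1))) :
    ∃ a b : Fin m, HasRankDivision
      (fun (i : {i : I // D.rowPart i = a}) (j : {j : J // D.colPart j = b}) => M i.1 j.1)
      q := by
  classical
  obtain ⟨D', hD'⟩ := hrank
  have hK2 : 2 ≤ 11 * (q + 1) := by omega
  obtain ⟨ha1, ha2, haN⟩ := side_facts hm D'.rowPart D.rowPart D'.rowMono D.rowMono D'.rowSurj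
  obtain ⟨hb1, hb2, hbN⟩ := side_facts hm D'.colPart D.colPart D'.colMono D.colMono D'.colSurj
  -- every cell of D' contains a `true` entry
  have hcell : ∀ t, t < 11 * (q + 1) → ∀ u, u < 11 * (q + 1) →
      ∃ i j, (D'.rowPart i).val = t ∧ (D'.colPart j).val = u ∧ M i j = true := by
    intro t ht u hu
    rcases hD' ⟨t, ht⟩ ⟨u, hu⟩ with ⟨S, hcard, hpart, hdist⟩ | ⟨S, hcard, hpart, hdist⟩
    · obtain ⟨i, hi, i', hi', hne⟩ := Finset.one_lt_card.mp (by omega : 1 < S.card)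
      obtain ⟨j, hj, hMne⟩ := hdist i hi i' hi' hne
      have hju : (D'.colPart j).val = u := by rw [hj]
      by_cases hMij : M i j = true
      · exact ⟨i, j, by rw [hpart i hi], hju, hMij⟩
      · refine ⟨i', j, by rw [hpart i' hi'], hju, ?_⟩
        have hf : M i j = false := by simpa using hMij
        rcases Bool.eq_false_or_eq_true (M i' j) with h2 | h2
        · exact h2
        · exact absurd (hf.trans h2.symm) hMne
    · obtain ⟨j, hj, j', hj', hne⟩ := Finset.one_lt_card.mp (by omega : 1 < S.card)
      obtain ⟨i, hi, hMne⟩ := hdist j hj j' hj' hne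
      have hit : (D'.rowPart i).val = t := by rw [hi]
      by_cases hMij : M i j = true
      · exact ⟨i, j, hit, by rw [hpart j hj], hMij⟩
      · refine ⟨i, j', hit, by rw [hpart j' hj'], ?_⟩
        have hf : M i j = false := by simpa using hMij
        rcases Bool.eq_false_or_eq_true (M i j') with h2 | h2
        · exact h2
        · exact absurd (hf.trans h2.symm) hMne
  -- the band condition between row parts and column parts
  have HC : ∀ t, t < 11 * (q + 1) → ∀ u, u < 11 * (q + 1) →
      ∃ x y, pLo (fun i => (D'.rowPart i).val) (fun i => (D.rowPart i).val) t ≤ x ∧ x ≤ pHi (fun i => (D'.rowPart i).val) (fun i => (D.rowPart i).val) t ∧ pLo (fun j => (D'.colPart j).val) (fun j => (D.colPart j).val) u ≤ y ∧ y ≤ pHi (fun j => (D'.colPart j).val) (fun j => (D.colPart j).val) u ∧ NatDist s x y := by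
    intro t ht u hu
    obtain ⟨i, j, hit, hju, hM⟩ := hcell t ht u hu
    have e1 : pLo (fun i => (D'.rowPart i).val) (fun i => (D.rowPart i).val) t ≤
        (D.rowPart i).val := pLo_le _ _ i hit
    have e2 : (D.rowPart i).val ≤
        pHi (fun i => (D'.rowPart i).val) (fun i => (D.rowPart i).val) t :=
      le_pHi (fun i => (D'.rowPart i).val) (fun i => (D.rowPart i).val) i hit
    have e3 : pLo (fun j => (D'.colPart j).val) (fun j => (D.colPart j).val) u ≤
        (D.colPart j).val := pLo_le _ _ j hju
    have e4 : (D.colPart j).val ≤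
        pHi (fun j => (D'.colPart j).val) (fun j => (D.colPart j).val) u :=
      le_pHi (fun j => (D'.colPart j).val) (fun j => (D.colPart j).val) j hju
    refine ⟨(D.rowPart i).val, (D.colPart j).val, e1, e2, e3, e4, ?_⟩
    by_contra hnd
    unfold NatDist at hnd
    push_neg at hnd
    obtain ⟨hd0, hd1, hds⟩ := hnd
    have hfalse : M i j = false := by
      apply hzero i j
      intro hmem
      simp only [Set.mem_insert_iff, Set.mem_singleton_iff] at hmem
      rcases hmem with h | h | h
      exacts [hd0 h, hd1 h, hds h]
    rw [hM] at hfalse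
    exact Bool.noConfusion hfalse
  -- extract a run of q consecutive row parts inside one zone row
  obtain ⟨cr, t₀, ht₀, hrunr⟩ :=
    comb_run q s (11 * (q + 1)) (m - 1) hq rfl (pLo (fun i => (D'.rowPart i).val) (fun i => (D.rowPart i).val)) (pHi (fun i => (D'.rowPart i).val) (fun i => (D.rowPart i).val)) (pLo (fun j => (D'.colPart j).val) (fun j => (D.colPart j).val)) (pHi (fun j => (D'.colPart j).val) (fun j => (D.colPart j).val))
      ha1 ha2 hb1 hb2 hbN HC
  -- and a run of q consecutive column parts inside one zone column
  obtain ⟨cc, u₀, hu₀, hrunc⟩ :=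
    comb_run q s (11 * (q + 1)) (m - 1) hq rfl (pLo (fun j => (D'.colPart j).val) (fun j => (D.colPart j).val)) (pHi (fun j => (D'.colPart j).val) (fun j => (D.colPart j).val)) (pLo (fun i => (D'.rowPart i).val) (fun i => (D.rowPart i).val)) (pHi (fun i => (D'.rowPart i).val) (fun i => (D.rowPart i).val))
      hb1 hb2 ha1 ha2 haN
      (fun u hu t ht => by
        obtain ⟨x, y, h1, h2, h3, h4, h5⟩ := HC t ht u hu
        exact ⟨y, x, h3, h4, h1, h2, natDist_comm h5⟩)
  have key_r : ∀ (i : I) (k : ℕ), k < q → (D'.rowPart i).val = t₀ + k →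
      (D.rowPart i).val = cr := by
    intro i k hk he
    have h1 : pLo (fun i => (D'.rowPart i).val) (fun i => (D.rowPart i).val) (t₀ + k) ≤
        (D.rowPart i).val := pLo_le _ _ i he
    have h2 : (D.rowPart i).val ≤
        pHi (fun i => (D'.rowPart i).val) (fun i => (D.rowPart i).val) (t₀ + k) :=
      le_pHi (fun i => (D'.rowPart i).val) (fun i => (D.rowPart i).val) i he
    obtain ⟨h3, h4⟩ := hrunr k hk
    omega
  have key_c : ∀ (j : J) (k : ℕ), k < q → (D'.colPart j).val = u₀ + k →
      (D.colPart j).val = cc := by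
    intro j k hk he
    have h1 : pLo (fun j => (D'.colPart j).val) (fun j => (D.colPart j).val) (u₀ + k) ≤
        (D.colPart j).val := pLo_le _ _ j he
    have h2 : (D.colPart j).val ≤
        pHi (fun j => (D'.colPart j).val) (fun j => (D.colPart j).val) (u₀ + k) :=
      le_pHi (fun j => (D'.colPart j).val) (fun j => (D.colPart j).val) j he
    obtain ⟨h3, h4⟩ := hrunc k hk
    omega
  obtain ⟨i₀, hi₀⟩ := D'.rowSurj ⟨t₀, by omega⟩
  obtain ⟨j₀, hj₀⟩ := D'.colSurj ⟨u₀, by omega⟩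
  have hcr : cr < m := by
    have h1 := key_r i₀ 0 hq (by rw [hi₀]; rfl)
    have := (D.rowPart i₀).isLt
    omega
  have hcc : cc < m := by
    have h1 := key_c j₀ 0 hq (by rw [hj₀]; rfl)
    have := (D.colPart j₀).isLt
    omega
  refine ⟨⟨cr, hcr⟩, ⟨cc, hcc⟩, ?_⟩
  have key_r' : ∀ (i : I) (k : ℕ), k < q → (D'.rowPart i).val = t₀ + k →
      D.rowPart i = ⟨cr, hcr⟩ := fun i k hk he => Fin.ext (key_r i k hk he)
  have key_c' : ∀ (j : J) (k : ℕ), k < q → (D'.colPart j).val = u₀ + k →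
      D.colPart j = ⟨cc, hcc⟩ := fun j k hk he => Fin.ext (key_c j k hk he)
  refine ⟨⟨fun i => ⟨min ((D'.rowPart i.1).val - t₀) (q - 1),
            Nat.lt_of_le_of_lt (min_le_right _ _) (Nat.sub_lt hq Nat.one_pos)⟩,
          fun j => ⟨min ((D'.colPart j.1).val - u₀) (q - 1),
            Nat.lt_of_le_of_lt (min_le_right _ _) (Nat.sub_lt hq Nat.one_pos)⟩,
          ?_, ?_, ?_, ?_⟩, ?_⟩
  · -- rowMono
    intro i i' h
    have h2 : (D'.rowPart i.1).val ≤ (D'.rowPart i'.1).val :=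
      Fin.le_def.mp (D'.rowMono (Subtype.coe_le_coe.mpr h))
    rw [Fin.mk_le_mk]
    omega
  · -- colMono
    intro j j' h
    have h2 : (D'.colPart j.1).val ≤ (D'.colPart j'.1).val :=
      Fin.le_def.mp (D'.colMono (Subtype.coe_le_coe.mpr h))
    rw [Fin.mk_le_mk]
    omega
  · -- rowSurj
    intro k
    obtain ⟨i, hi⟩ := D'.rowSurj ⟨t₀ + k.val, by have := k.isLt; omega⟩
    have hz : D.rowPart i = ⟨cr, hcr⟩ := key_r' i k.val k.isLt (by rw [hi])
    refine ⟨⟨i, hz⟩, ?_⟩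
    apply Fin.ext
    show min ((D'.rowPart i).val - t₀) (q - 1) = k.val
    rw [hi]
    show min (t₀ + k.val - t₀) (q - 1) = k.val
    have := k.isLt
    omega
  · -- colSurj
    intro k
    obtain ⟨j, hj⟩ := D'.colSurj ⟨u₀ + k.val, by have := k.isLt; omega⟩
    have hz : D.colPart j = ⟨cc, hcc⟩ := key_c' j k.val k.isLt (by rw [hj])
    refine ⟨⟨j, hz⟩, ?_⟩
    apply Fin.ext
    show min ((D'.colPart j).val - u₀) (q - 1) = k.val
    rw [hj]
    show min (u₀ + k.val - u₀) (q - 1) = k.val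
    have := k.isLt
    omega
  · -- cells
    intro a' b'
    have hta : t₀ + a'.val < 11 * (q + 1) := by have := a'.isLt; omega
    have hub : u₀ + b'.val < 11 * (q + 1) := by have := b'.isLt; omega
    have hcase := hD' ⟨t₀ + a'.val, hta⟩ ⟨u₀ + b'.val, hub⟩
    rcases hcase with h | h
    · obtain ⟨S, hcard, hpart, hdist⟩ := h
      left
      have hallS : ∀ i ∈ S, D.rowPart i = ⟨cr, hcr⟩ := by
        intro i hi
        exact key_r' i a'.val a'.isLt (by rw [hpart i hi])
      refine ⟨S.subtype (fun i => D.rowPart i = ⟨cr, hcr⟩), ?_, ?_, ?_⟩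
      · rw [Finset.card_subtype, Finset.filter_true_of_mem hallS]
        omega
      · intro i hi
        rw [Finset.mem_subtype] at hi
        apply Fin.ext
        show min ((D'.rowPart i.1).val - t₀) (q - 1) = a'.val
        rw [hpart i.1 hi]
        show min (t₀ + a'.val - t₀) (q - 1) = a'.val
        have := a'.isLt
        omega
      · intro i hiS i' hiS' hne
        rw [Finset.mem_subtype] at hiS hiS'
        have hne' : i.1 ≠ i'.1 := fun hh => hne (Subtype.ext hh)
        have hw := hdist i.1 hiS i'.1 hiS' hne'
        obtain ⟨j, hj, hMne⟩ := hw
        have hjz : D.colPart j = ⟨cc, hcc⟩ := key_c' j b'.val b'.isLt (by rw [hj])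
        refine ⟨⟨j, hjz⟩, ?_, hMne⟩
        apply Fin.ext
        show min ((D'.colPart j).val - u₀) (q - 1) = b'.val
        rw [hj]
        show min (u₀ + b'.val - u₀) (q - 1) = b'.val
        have := b'.isLt
        omega
    · obtain ⟨S, hcard, hpart, hdist⟩ := h
      right
      have hallS : ∀ j ∈ S, D.colPart j = ⟨cc, hcc⟩ := by
        intro j hj
        exact key_c' j b'.val b'.isLt (by rw [hpart j hj])
      refine ⟨S.subtype (fun j => D.colPart j = ⟨cc, hcc⟩), ?_, ?_, ?_⟩
      · rw [Finset.card_subtype, Finset.filter_true_of_mem hallS]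
        omega
      · intro j hj
        rw [Finset.mem_subtype] at hj
        apply Fin.ext
        show min ((D'.colPart j.1).val - u₀) (q - 1) = b'.val
        rw [hpart j.1 hj]
        show min (u₀ + b'.val - u₀) (q - 1) = b'.val
        have := b'.isLt
        omega
      · intro j hjS j' hjS' hne
        rw [Finset.mem_subtype] at hjS hjS'
        have hne' : j.1 ≠ j'.1 := fun hh => hne (Subtype.ext hh)
        have hw := hdist j.1 hjS j'.1 hjS' hne'
        obtain ⟨i, hi, hMne⟩ := hw
        have hiz : D.rowPart i = ⟨cr, hcr⟩ := key_r' i a'.val a'.isLt (by rw [hi])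
        refine ⟨⟨i, hiz⟩, ?_, hMne⟩
        apply Fin.ext
        show min ((D'.rowPart i).val - t₀) (q - 1) = a'.val
        rw [hi]
        show min (t₀ + a'.val - t₀) (q - 1) = a'.val
        have := a'.isLt
        omega
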